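/- Let h be a closed lower halfspace in ℝ³ and let G be a nonempty finite family of closed lower halfspaces such that h is contained in the union of the members of G. Then there exist g₁, g₂, g₃ ∈ G (not necessarily distinct) with h ⊆ g₁ ∪ g₂ ∪ g₃. -/

import Mathlib

/-- A point in `ℝ³`. -/
abbrev Pt : Type := ℝ × ℝ × ℝ

/-- A closed lower halfspace in `ℝ³`: `{(x,y,z) : z ≤ a*x + b*y + c}`. -/
def IsLowerHalfspace (h : Set Pt) : Prop :=
  ∃ a b c : ℝ, h = {p : Pt | p.2.2 ≤ a * p.1 + b * p.2.1 + c}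

/-- From a nonempty finset of cardinality at most 3, one can pick three (not necessarily
distinct) elements covering it. -/
lemma exists_three_of_card_le {α : Type*} (I : Finset α) (hne : I.Nonempty)
    (hc : I.card ≤ 3) :
    ∃ a ∈ I, ∃ b ∈ I, ∃ c ∈ I, ∀ x ∈ I, x = a ∨ x = b ∨ x = c := by
  have hlen : I.toList.length ≤ 3 := by rw [Finset.length_toList]; exact hc
  have hmem : ∀ j, j ∈ I ↔ j ∈ I.toList := fun j => (Finset.mem_toList).symm
  rcases hl : I.toList with _ | ⟨x, _ | ⟨y, _ | ⟨z, _ | ⟨w, t⟩⟩⟩⟩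
  · obtain ⟨a, ha⟩ := hne
    rw [hmem, hl] at ha; simp at ha
  · have hx : x ∈ I := by rw [hmem, hl]; simp
    exact ⟨x, hx, x, hx, x, hx, fun j hj => by
      rw [hmem, hl] at hj; simpa using hj⟩
  · have hx : x ∈ I := by rw [hmem, hl]; simp
    have hy : y ∈ I := by rw [hmem, hl]; simp
    exact ⟨x, hx, y, hy, y, hy, fun j hj => by
      rw [hmem, hl] at hj; rcases List.mem_pair.mp hj with rfl | rfl
      · exact Or.inl rfl
      · exact Or.inr (Or.inl rfl)⟩
  · have hx : x ∈ I := by rw [hmem, hl]; simp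
    have hy : y ∈ I := by rw [hmem, hl]; simp
    have hz : z ∈ I := by rw [hmem, hl]; simp
    exact ⟨x, hx, y, hy, z, hz, fun j hj => by
      rw [hmem, hl] at hj; simpa using hj⟩
  · rw [hl] at hlen; simp at hlen; omega

/-- If a closed lower halfspace `h` is covered by the union of a nonempty finite family `G`
of closed lower halfspaces, then `h` is covered by (at most) three members of `G`. -/
theorem lower_halfspace_covered_by_three (h : Set Pt)
    (hh : IsLowerHalfspace h) (G : Set (Set Pt)) (hGfin : G.Finite)
    (hGne : G.Nonempty) (hGlh : ∀ g ∈ G, IsLowerHalfspace g)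
    (hcover : h ⊆ ⋃₀ G) :
    ∃ g₁ ∈ G, ∃ g₂ ∈ G, ∃ g₃ ∈ G, h ⊆ g₁ ∪ g₂ ∪ g₃ := by
  classical
  obtain ⟨a₀, b₀, c₀, rfl⟩ := hh
  haveI : Fintype G := hGfin.fintype
  choose A B C hABC using fun (g : G) => hGlh g g.2
  -- affine difference functions on ℝ²
  set L : G → (ℝ × ℝ) → ℝ := fun g v =>
    A g * v.1 + B g * v.2 + C g - (a₀ * v.1 + b₀ * v.2 + c₀) with hLdef
  set S : G → Set (ℝ × ℝ) := fun g => {v | L g v < 0} with hSdef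
  have hconv : ∀ g : G, Convex ℝ (S g) := by
    intro g
    intro v hv w hw θ σ hθ hσ hθσ
    simp only [hSdef, Set.mem_setOf_eq] at hv hw ⊢
    have hexp : L g (θ • v + σ • w) = θ * L g v + σ * L g w := by
      simp only [hLdef, Prod.smul_fst, Prod.smul_snd, Prod.fst_add, Prod.snd_add,
        smul_eq_mul]
      linear_combination (c₀ - C g) * hθσ
    rw [hexp]
    rcases hθ.eq_or_lt with rfl | hθ'
    · rcases hσ.eq_or_lt with rfl | hσ'
      · simp at hθσ
      · nlinarith
    · rcases hσ.eq_or_lt with rfl | hσ'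
      · nlinarith
      · nlinarith
  -- the intersection of all S g is empty
  have hempty : ¬ (⋂ i ∈ (Finset.univ : Finset G), S i).Nonempty := by
    rintro ⟨v, hv⟩
    have hp : (v.1, v.2, a₀ * v.1 + b₀ * v.2 + c₀) ∈
        {p : Pt | p.2.2 ≤ a₀ * p.1 + b₀ * p.2.1 + c₀} := by simp
    obtain ⟨g, hgG, hpg⟩ := hcover hp
    have hSg : v ∈ S ⟨g, hgG⟩ := by
      simp only [Set.mem_iInter] at hv
      exact hv ⟨g, hgG⟩ (Finset.mem_univ _)
    have hpg' : (v.1, v.2, a₀ * v.1 + b₀ * v.2 + c₀) ∈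
        {p : Pt | p.2.2 ≤ A ⟨g, hgG⟩ * p.1 + B ⟨g, hgG⟩ * p.2.1 + C ⟨g, hgG⟩} := by
      rw [← hABC ⟨g, hgG⟩]; exact hpg
    simp only [Set.mem_setOf_eq] at hpg'
    have hpg := hpg' 
    simp only [hSdef, hLdef, Set.mem_setOf_eq] at hSg
    linarith
  -- Helly's theorem (contrapositive): some ≤ 3 of the S g have empty intersection
  have hdim : Module.finrank ℝ (ℝ × ℝ) = 2 := by simp
  have hnot : ¬ ∀ I ⊆ (Finset.univ : Finset G),
      I.card ≤ Module.finrank ℝ (ℝ × ℝ) + 1 → (⋂ i ∈ I, S i).Nonempty := by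
    intro H
    exact hempty (Convex.helly_theorem' (fun i _ => hconv i) H)
  push_neg at hnot
  obtain ⟨I, -, hIcard, hInone⟩ := hnot
  rw [hdim] at hIcard
  -- I is nonempty
  have hIne : I.Nonempty := by
    rcases I.eq_empty_or_nonempty with rfl | hne
    · simp at hInone
    · exact hne
  obtain ⟨i₁, hi₁, i₂, hi₂, i₃, hi₃, hcov3⟩ := exists_three_of_card_le I hIne hIcard
  refine ⟨(i₁ : Set Pt), i₁.2, (i₂ : Set Pt), i₂.2, (i₃ : Set Pt), i₃.2, ?_⟩
  intro p hp
  simp only [Set.mem_setOf_eq] at hp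
  have hvnot : (p.1, p.2.1) ∉ ⋂ i ∈ I, S i := by
    rw [hInone]; exact Set.notMem_empty _
  simp only [Set.mem_iInter, not_forall] at hvnot
  obtain ⟨i, hiI, hvi⟩ := hvnot
  simp only [hSdef, hLdef, Set.mem_setOf_eq, not_lt] at hvi
  have hpi : p ∈ (i : Set Pt) := by
    rw [hABC i]
    simp only [Set.mem_setOf_eq]
    linarith
  rcases hcov3 i hiI with rfl | rfl | rfl
  · exact Or.inl (Or.inl hpi)
  · exact Or.inl (Or.inr hpi)
  · exact Or.inr hpi
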